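/- arXiv:1510.06274 — 2 statements merged into one kernel-verified Lean document; each statement's English description precedes it below -/
import Mathlib

section
/- Let p be a prime and A ∈ GL_N(𝔽_p) with det A = 1, N ≥ 2, and suppose the order of A in GL_N(𝔽_p) equals q = (p^N − 1)/(p − 1). Then every nonzero vector v ∈ 𝔽_p^N has orbit {Aᵏv : k ≥ 0} of size exactly q, and there are exactly p − 1 distinct such orbits partitioning 𝔽_p^N \ {0}. -/
open Polynomial

section Stmt9Aux

variable {p N : ℕ} [Fact p.Prime] (M : Matrix (Fin N) (Fin N) (ZMod p))

private lemma stmt9_key (hirr : Irreducible M.charpoly) (g : (ZMod p)[X])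
    {v : Fin N → ZMod p} (hv : v ≠ 0)
    (h : (aeval M g).mulVec v = 0) : aeval M g = 0 := by
  by_cases hdvd : M.charpoly ∣ g
  · obtain ⟨c, rfl⟩ := hdvd
    rw [map_mul, Matrix.aeval_self_charpoly, zero_mul]
  · exfalso
    obtain ⟨a, b, hab⟩ := (hirr.coprime_iff_not_dvd.mpr hdvd)
    apply hv
    have h1 : aeval M (a * M.charpoly + b * g) = 1 := by rw [hab]; simp
    rw [map_add, map_mul, map_mul, Matrix.aeval_self_charpoly, mul_zero, zero_add] at h1
    calc v = (1 : Matrix (Fin N) (Fin N) (ZMod p)).mulVec v := (Matrix.one_mulVec v).symm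
    _ = (aeval M b * aeval M g).mulVec v := by rw [h1]
    _ = (aeval M b).mulVec ((aeval M g).mulVec v) := (Matrix.mulVec_mulVec v _ _).symm
    _ = 0 := by rw [h, Matrix.mulVec_zero]

private lemma stmt9_pow_fix (hirr : Irreducible M.charpoly) {v : Fin N → ZMod p}
    (hv : v ≠ 0) {d : ℕ} (h : (M ^ d).mulVec v = v) : M ^ d = 1 := by
  have h0 : (aeval M ((X : (ZMod p)[X]) ^ d - 1)).mulVec v = 0 := by
    rw [map_sub, map_pow, aeval_X, map_one, Matrix.sub_mulVec, Matrix.one_mulVec, h, sub_self]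
  have h1 := stmt9_key M hirr _ hv h0
  rw [map_sub, map_pow, aeval_X, map_one, sub_eq_zero] at h1
  exact h1

private lemma stmt9_nonzero (hN : 0 < N) (hdet : M.det = 1) (hirr : Irreducible M.charpoly)
    {v : Fin N → ZMod p} (hv : v ≠ 0) (k : ℕ) : (M ^ k).mulVec v ≠ 0 := by
  intro h
  have h0 : (aeval M ((X : (ZMod p)[X]) ^ k)).mulVec v = 0 := by
    rwa [map_pow, aeval_X]
  have h1 := stmt9_key M hirr _ hv h0
  rw [map_pow, aeval_X] at h1
  have h2 : (M ^ k).det = 1 := by rw [Matrix.det_pow, hdet, one_pow]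
  haveI : Nonempty (Fin N) := ⟨⟨0, hN⟩⟩
  rw [h1, Matrix.det_zero] at h2
  exact zero_ne_one h2

private lemma stmt9_pow_cancel (hq : 0 < orderOf M) (k : ℕ) :
    M ^ (orderOf M - k % orderOf M + k) = 1 := by
  have hle : k % orderOf M ≤ orderOf M := (Nat.mod_lt k hq).le
  have e1 : orderOf M - k % orderOf M + k = orderOf M * (1 + k / orderOf M) := by
    nth_rewrite 2 [← Nat.mod_add_div k (orderOf M)]
    rw [← add_assoc, Nat.sub_add_cancel hle, mul_add, mul_one]
  rw [e1, pow_mul, pow_orderOf_eq_one, one_pow]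

private lemma stmt9_orbit_eq (hq : 0 < orderOf M) {v w : Fin N → ZMod p}
    (hw : w ∈ {w : Fin N → ZMod p | ∃ k : ℕ, w = (M ^ k).mulVec v}) :
    {x : Fin N → ZMod p | ∃ k : ℕ, x = (M ^ k).mulVec w}
      = {x : Fin N → ZMod p | ∃ k : ℕ, x = (M ^ k).mulVec v} := by
  obtain ⟨k, rfl⟩ := hw
  ext x
  constructor
  · rintro ⟨j, rfl⟩
    exact ⟨j + k, by rw [Matrix.mulVec_mulVec, ← pow_add]⟩
  · rintro ⟨j, rfl⟩
    refine ⟨j + (orderOf M - k % orderOf M), ?_⟩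
    rw [Matrix.mulVec_mulVec, ← pow_add, add_assoc, pow_add, stmt9_pow_cancel M hq, mul_one]

private lemma stmt9_card_orbit (hirr : Irreducible M.charpoly) (hq : 0 < orderOf M)
    {v : Fin N → ZMod p} (hv : v ≠ 0) :
    Nat.card {w : Fin N → ZMod p | ∃ k : ℕ, w = (M ^ k).mulVec v} = orderOf M := by
  have hrange : {w : Fin N → ZMod p | ∃ k : ℕ, w = (M ^ k).mulVec v}
      = Set.range (fun i : Fin (orderOf M) => (M ^ (i : ℕ)).mulVec v) := by
    ext x
    constructor
    · rintro ⟨k, rfl⟩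
      exact ⟨⟨k % orderOf M, Nat.mod_lt k hq⟩, by simp [pow_mod_orderOf]⟩
    · rintro ⟨i, rfl⟩
      exact ⟨(i : ℕ), rfl⟩
  have hinj : Function.Injective (fun i : Fin (orderOf M) => (M ^ (i : ℕ)).mulVec v) := by
    have helper : ∀ i j : ℕ, i ≤ j → j < orderOf M →
        (M ^ i).mulVec v = (M ^ j).mulVec v → i = j := by
      intro i j hij hj h
      have hi : i ≤ orderOf M := (lt_of_le_of_lt hij hj).le
      have h2 := congrArg (fun w => (M ^ (orderOf M - i)).mulVec w) h
      simp only [Matrix.mulVec_mulVec, ← pow_add] at h2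
      rw [Nat.sub_add_cancel hi, pow_orderOf_eq_one, Matrix.one_mulVec] at h2
      have h3 : M ^ (orderOf M - i + j) = 1 := stmt9_pow_fix M hirr hv h2.symm
      have h4 : orderOf M ∣ orderOf M - i + j := orderOf_dvd_of_pow_eq_one h3
      have h5 : orderOf M - i + j = orderOf M + (j - i) := by omega
      rw [h5] at h4
      have h6 : orderOf M ∣ (j - i) := (Nat.dvd_add_right dvd_rfl).mp h4
      have h7 : j - i = 0 := Nat.eq_zero_of_dvd_of_lt h6 (by omega) |>.symm ▸ rfl
      omega
    intro i j h
    rcases le_total (i : ℕ) (j : ℕ) with hle | hle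
    · exact Fin.ext (helper i j hle j.isLt h)
    · exact (Fin.ext (helper j i hle i.isLt h.symm)).symm
  rw [hrange, Nat.card_range_of_injective hinj, Nat.card_eq_fintype_card, Fintype.card_fin]

end Stmt9Aux

theorem stmt9 (p N : ℕ) [Fact p.Prime] (hN : 2 ≤ N)
    (M : Matrix (Fin N) (Fin N) (ZMod p)) (hdet : M.det = 1)
    (hirr : Irreducible M.charpoly)
    (hord : orderOf M = (p ^ N - 1) / (p - 1)) :
    (∀ v : Fin N → ZMod p, v ≠ 0 →
        Nat.card {w : Fin N → ZMod p | ∃ k : ℕ, w = (M ^ k).mulVec v} = (p ^ N - 1) / (p - 1)) ∧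
    Nat.card {S : Set (Fin N → ZMod p) |
        ∃ v : Fin N → ZMod p, v ≠ 0 ∧ S = {w | ∃ k : ℕ, w = (M ^ k).mulVec v}} = p - 1 ∧
    {S : Set (Fin N → ZMod p) |
        ∃ v : Fin N → ZMod p, v ≠ 0 ∧ S = {w | ∃ k : ℕ, w = (M ^ k).mulVec v}}.PairwiseDisjoint id ∧
    ⋃₀ {S : Set (Fin N → ZMod p) |
        ∃ v : Fin N → ZMod p, v ≠ 0 ∧ S = {w | ∃ k : ℕ, w = (M ^ k).mulVec v}}
      = {v : Fin N → ZMod p | v ≠ 0} := by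
  classical
  have hp : 2 ≤ p := (Fact.out (p := p.Prime)).two_le
  have hNpos : 0 < N := by omega
  have hpN : 1 < p ^ N := Nat.one_lt_pow (by omega) (by omega)
  have hdvd1 : (p - 1) ∣ (p ^ N - 1) := by
    simpa using Nat.sub_dvd_pow_sub_pow p 1 N
  have hqmul : (p ^ N - 1) / (p - 1) * (p - 1) = p ^ N - 1 := Nat.div_mul_cancel hdvd1
  have hq : 0 < orderOf M := by
    rw [hord]
    exact Nat.div_pos (Nat.le_of_dvd (by omega) hdvd1) (by omega)
  have hcard1 : ∀ v : Fin N → ZMod p, v ≠ 0 →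
      Nat.card {w : Fin N → ZMod p | ∃ k : ℕ, w = (M ^ k).mulVec v} = (p ^ N - 1) / (p - 1) := by
    intro v hv
    rw [stmt9_card_orbit M hirr hq hv, hord]
  refine ⟨hcard1, ?_, ?_, ?_⟩
  · -- number of orbits
    set O : Set (Set (Fin N → ZMod p)) := {S : Set (Fin N → ZMod p) |
        ∃ v : Fin N → ZMod p, v ≠ 0 ∧ S = {w | ∃ k : ℕ, w = (M ^ k).mulVec v}} with hO
    have mem_self : ∀ v : Fin N → ZMod p,
        v ∈ {w : Fin N → ZMod p | ∃ k : ℕ, w = (M ^ k).mulVec v} :=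
      fun v => ⟨0, by rw [pow_zero, Matrix.one_mulVec]⟩
    let f : {v : Fin N → ZMod p // v ≠ 0} → Σ S : O, {x // x ∈ (S : Set (Fin N → ZMod p))} :=
      fun v => ⟨⟨{w | ∃ k : ℕ, w = (M ^ k).mulVec v.1}, ⟨v.1, v.2, rfl⟩⟩, ⟨v.1, mem_self v.1⟩⟩
    have hbij : Function.Bijective f := by
      constructor
      · intro a b h
        exact Subtype.ext (congrArg (fun t : Σ S : O,
          {x // x ∈ (S : Set (Fin N → ZMod p))} => (t.2 : Fin N → ZMod p)) h)
      · rintro ⟨⟨S, hSO⟩, ⟨x, hx⟩⟩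
        have h2 := hSO
        obtain ⟨v, hv, hS⟩ := h2
        have hxS : x ∈ {w : Fin N → ZMod p | ∃ k : ℕ, w = (M ^ k).mulVec v} := hS ▸ hx
        have hxne : x ≠ 0 := by
          obtain ⟨k, rfl⟩ := hxS
          exact stmt9_nonzero M hNpos hdet hirr hv k
        have horb : {w : Fin N → ZMod p | ∃ k : ℕ, w = (M ^ k).mulVec x}
            = {w | ∃ k : ℕ, w = (M ^ k).mulVec v} := stmt9_orbit_eq M hq hxS
        have hS2 : S = {w : Fin N → ZMod p | ∃ k : ℕ, w = (M ^ k).mulVec x} := by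
          rw [hS, ← horb]
        subst hS2
        exact ⟨⟨x, hxne⟩, rfl⟩
    have hcardeq := Nat.card_eq_of_bijective f hbij
    have hL : Nat.card {v : Fin N → ZMod p // v ≠ 0} = p ^ N - 1 := by
      rw [Nat.card_eq_fintype_card]
      have : Fintype.card {v : Fin N → ZMod p // ¬ (v = 0)}
          = Fintype.card (Fin N → ZMod p) - Fintype.card {v : Fin N → ZMod p // v = 0} :=
        Fintype.card_subtype_compl _
      rw [this, Fintype.card_subtype_eq, Fintype.card_fun, ZMod.card, Fintype.card_fin]
    have horbcard : ∀ S : O, Nat.card {x // x ∈ (S : Set (Fin N → ZMod p))}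
        = (p ^ N - 1) / (p - 1) := by
      rintro ⟨S, hS⟩
      obtain ⟨v, hv, rfl⟩ := hS
      exact hcard1 v hv
    have hR : Nat.card (Σ S : O, {x // x ∈ (S : Set (Fin N → ZMod p))})
        = Nat.card O * ((p ^ N - 1) / (p - 1)) := by
      rw [Nat.card_eq_fintype_card, Fintype.card_sigma]
      rw [Nat.card_eq_fintype_card]
      calc ∑ S : O, Fintype.card {x // x ∈ (S : Set (Fin N → ZMod p))}
          = ∑ _S : O, (p ^ N - 1) / (p - 1) := by
            refine Finset.sum_congr rfl fun S _ => ?_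
            rw [← Nat.card_eq_fintype_card]
            exact horbcard S
        _ = Fintype.card O * ((p ^ N - 1) / (p - 1)) := by
            rw [Finset.sum_const, smul_eq_mul, Finset.card_univ]
    rw [hL, hR] at hcardeq
    have hfinal : (p ^ N - 1) = Nat.card O * ((p ^ N - 1) / (p - 1)) := hcardeq
    have : (p - 1) * ((p ^ N - 1) / (p - 1)) = Nat.card O * ((p ^ N - 1) / (p - 1)) := by
      rw [mul_comm (p - 1), hqmul, ← hfinal]
    exact (Nat.eq_of_mul_eq_mul_right (by rw [← hord]; exact hq) this.symm)
  · -- pairwise disjoint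
    rintro S ⟨v, hv, rfl⟩ T ⟨w, hw, rfl⟩ hne
    simp only [Function.onFun, id_eq]
    rw [Set.disjoint_left]
    intro x hxS hxT
    exact hne (by rw [← stmt9_orbit_eq M hq hxS, ← stmt9_orbit_eq M hq hxT])
  · -- union
    ext x
    simp only [Set.mem_sUnion, Set.mem_setOf_eq]
    constructor
    · rintro ⟨S, ⟨v, hv, rfl⟩, hxS⟩
      obtain ⟨k, rfl⟩ := hxS
      exact stmt9_nonzero M hNpos hdet hirr hv k
    · intro hx
      exact ⟨{w | ∃ k : ℕ, w = (M ^ k).mulVec x}, ⟨x, hx, rfl⟩,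
        ⟨0, by rw [pow_zero, Matrix.one_mulVec]⟩⟩
end

section
/- For N ≥ 2, the N×N matrix A(N,s) has determinant 1 for every integer s. -/
/-- The two-parameter MIXMAX matrix `A(N,s)` (indices `i j : Fin N` are 0-based,
corresponding to the 1-based indices `i+1, j+1` of the paper). -/
def mixmaxMatrix (N : ℕ) (s : ℤ) : Matrix (Fin N) (Fin N) ℤ :=
  Matrix.of fun i j =>
    if i.val = 0 then 1
    else if j.val = 0 then 1
    else if i.val < j.val then 1
    else if i = j then 2
    else if i.val = 2 ∧ j.val = 1 then 3 + s
    else (i.val : ℤ) - (j.val : ℤ) + 2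

/-- Row-difference matrix: row i ↦ row i − row (i−1). -/
def mmM (N : ℕ) : Matrix (Fin N) (Fin N) ℤ :=
  Matrix.of fun i k => if k = i then 1 else if (k : ℕ) + 1 = (i : ℕ) then -1 else 0

/-- Column operation: subtract column 0 from every other column. -/
def mmU (N : ℕ) : Matrix (Fin N) (Fin N) ℤ :=
  Matrix.of fun k j => if k = j then 1 else if (k : ℕ) = 0 then -1 else 0

/-- The resulting lower-triangular matrix with unit diagonal. -/
def mmC (N : ℕ) (s : ℤ) : Matrix (Fin N) (Fin N) ℤ :=
  Matrix.of fun i j =>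
    if (i : ℕ) < (j : ℕ) then 0
    else if i = j then 1
    else if (j : ℕ) = 0 then 0
    else if (i : ℕ) = 2 ∧ (j : ℕ) = 1 then 1 + s
    else if (i : ℕ) = 3 ∧ (j : ℕ) = 1 then 1 - s
    else 1

lemma mmM_det (N : ℕ) : (mmM N).det = 1 := by
  rw [Matrix.det_of_lowerTriangular (mmM N)
    (by intro i j h
        have hij : (i : ℕ) < (j : ℕ) := by simpa using h
        simp only [mmM, Matrix.of_apply, Fin.ext_iff]
        split_ifs <;> omega)]
  simp [mmM]

lemma mmU_det (N : ℕ) : (mmU N).det = 1 := by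
  rw [Matrix.det_of_upperTriangular
    (by intro i j h
        have hij : (j : ℕ) < (i : ℕ) := h
        simp only [mmU, Matrix.of_apply, Fin.ext_iff]
        split_ifs <;> omega)]
  simp [mmU]

lemma mmC_det (N : ℕ) (s : ℤ) : (mmC N s).det = 1 := by
  rw [Matrix.det_of_lowerTriangular (mmC N s)
    (by intro i j h
        have hij : (i : ℕ) < (j : ℕ) := by simpa using h
        simp only [mmC, Matrix.of_apply]
        rw [if_pos hij])]
  simp [mmC]

lemma mmAU (n : ℕ) (s : ℤ) (i j : Fin (n + 2)) :
    (mixmaxMatrix (n + 2) s * mmU (n + 2)) i j =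
      if (j : ℕ) = 0 then 1 else mixmaxMatrix (n + 2) s i j - 1 := by
  rw [Matrix.mul_apply]
  have hU : ∀ k : Fin (n + 2), mmU (n + 2) k j =
      (if k = j then (1 : ℤ) else 0) +
      (if k = (0 : Fin (n + 2)) then (if (j : ℕ) = 0 then 0 else -1) else 0) := by
    intro k
    simp only [mmU, Matrix.of_apply]
    by_cases h1 : k = j <;> by_cases h2 : k = (0 : Fin (n + 2)) <;>
      simp only [Fin.ext_iff, Fin.val_zero] at h1 h2 ⊢ <;> split_ifs <;> omega
  have hA0 : mixmaxMatrix (n + 2) s i (0 : Fin (n + 2)) = 1 := by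
    simp only [mixmaxMatrix, Matrix.of_apply]
    split_ifs <;> simp_all
  simp only [hU, mul_add, Finset.sum_add_distrib, mul_ite, mul_one, mul_zero,
    Finset.sum_ite_eq', Finset.mem_univ, if_true, hA0]
  split_ifs with h
  · have : i = j ∨ True := Or.inr trivial
    have hj : j = (0 : Fin (n + 2)) := by simp [Fin.ext_iff, h]
    rw [hj, hA0]; ring
  · ring

lemma mm_key (n : ℕ) (s : ℤ) :
    mmM (n + 2) * (mixmaxMatrix (n + 2) s * mmU (n + 2)) = mmC (n + 2) s := by
  ext i j
  rw [Matrix.mul_apply]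
  have hM : ∀ k : Fin (n + 2), mmM (n + 2) i k =
      (if k = i then (1 : ℤ) else 0) + (if (k : ℕ) + 1 = (i : ℕ) then -1 else 0) := by
    intro k
    simp only [mmM, Matrix.of_apply]
    by_cases h1 : k = i <;> by_cases h2 : (k : ℕ) + 1 = (i : ℕ) <;>
      simp_all [Fin.ext_iff] <;> omega
  simp only [hM, add_mul, Finset.sum_add_distrib, ite_mul, one_mul, zero_mul,
    Finset.sum_ite_eq', Finset.mem_univ, if_true, mmAU]
  induction i using Fin.cases with
  | zero =>
    have hzero : ∀ k : Fin (n + 2), ¬ ((k : ℕ) + 1 = ((0 : Fin (n + 2)) : ℕ)) := by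
      intro k; simp
    simp only [hzero, if_false, neg_mul, Finset.sum_const_zero, add_zero]
    simp only [mixmaxMatrix, mmC, Matrix.of_apply, Fin.val_zero, Fin.ext_iff]
    split_ifs <;> omega
  | succ p =>
    have hcond : ∀ k : Fin (n + 2), ((k : ℕ) + 1 = ((p.succ : Fin (n + 2)) : ℕ)) ↔
        k = p.castSucc := by
      intro k; simp [Fin.ext_iff]
    simp only [hcond]
    rw [Finset.sum_ite_eq' Finset.univ p.castSucc
      (fun k => (-1 : ℤ) * if (j : ℕ) = 0 then 1 else mixmaxMatrix (n + 2) s k j - 1)]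
    simp only [Finset.mem_univ, if_true, neg_one_mul]
    simp only [mixmaxMatrix, mmC, Matrix.of_apply, Fin.ext_iff, Fin.val_succ,
      Fin.coe_castSucc]
    have hj := j.isLt
    have hp := p.isLt
    split_ifs <;> push_cast <;> (try omega) <;>
      exact (by assumption : False).elim

theorem stmt15 (N : ℕ) (hN : 2 ≤ N) (s : ℤ) : (mixmaxMatrix N s).det = 1 := by
  obtain ⟨n, rfl⟩ : ∃ n, N = n + 2 := ⟨N - 2, by omega⟩
  have h := congrArg Matrix.det (mm_key n s)
  rw [Matrix.det_mul, Matrix.det_mul, mmM_det, mmU_det, mmC_det] at h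
  linarith
end
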